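/- Bivariate joint probabilities: consider two variables j and j' of the same block of the one-factor binary model with β_j ≤ β_{j'}, and define p_{hh'} := ∫₀¹ p_j(u)^h(1−p_j(u))^{1−h} · p_{j'}(u)^{h'}(1−p_{j'}(u))^{1−h'} du for h, h' ∈ {0,1}. Let r := s·ε_j ε_{j'} β_j (1−β_{j'}), where s = +1 if δ_j = δ_{j'} and s = −1 if δ_j ≠ δ_{j'}. Then p_{11} = α_j α_{j'} + r, p_{01} = (1−α_j)α_{j'} − r, p_{10} = α_j(1−α_{j'}) − r, and p_{00} = (1−α_j)(1−α_{j'}) + r. -/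

import Mathlib

open MeasureTheory

private lemma step_eq_indicator (c k : ℝ) :
    (fun u : ℝ => if u < c then k else 0) = Set.indicator (Set.Iio c) (fun _ => k) := by
  ext u; simp [Set.indicator_apply]

private lemma step_intervalIntegrable (c k : ℝ) :
    IntervalIntegrable (fun u : ℝ => if u < c then k else 0) volume 0 1 := by
  rw [step_eq_indicator, intervalIntegrable_iff]
  exact IntegrableOn.indicator (integrableOn_const measure_Ioc_lt_top.ne)
    measurableSet_Iio

private lemma step_integral (c k : ℝ) (h0 : 0 ≤ c) (h1 : c ≤ 1) :
    ∫ u in (0:ℝ)..1, (if u < c then k else 0) = k * c := by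
  rw [intervalIntegral.integral_of_le (by norm_num), step_eq_indicator,
    MeasureTheory.setIntegral_indicator measurableSet_Iio, setIntegral_const]
  have h : Set.Ioc (0:ℝ) 1 ∩ Set.Iio c = Set.Ioo 0 c := by
    ext u
    simp only [Set.mem_inter_iff, Set.mem_Iio, Set.mem_Ioc, Set.mem_Ioo]
    constructor
    · rintro ⟨⟨h2, _⟩, h⟩; exact ⟨h2, h⟩
    · rintro ⟨h2, h⟩; exact ⟨⟨h2, h.le.trans h1⟩, h⟩
  rw [h]
  simp [Real.volume_Ioo, ENNReal.toReal_ofReal h0, mul_comm, max_eq_left h0]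

private lemma step2_integral (a b x y z w : ℝ) (h0 : 0 ≤ a) (hab : a ≤ b) (hb1 : b ≤ 1) :
    ∫ u in (0:ℝ)..1, (if u < a then x else y) * (if u < b then z else w)
      = a * (x * z) + (b - a) * (y * z) + (1 - b) * (y * w) := by
  have hfun : ∀ u : ℝ, (if u < a then x else y) * (if u < b then z else w)
      = (if u < a then x * z - y * z else 0) + ((if u < b then y * z - y * w else 0) + y * w) := by
    intro u
    by_cases h1 : u < a
    · have h2 : u < b := lt_of_lt_of_le h1 hab
      simp only [h1, h2, if_true]; ring
    · by_cases h2 : u < b <;> simp only [h1, h2, if_true, if_false] <;> ring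
  simp_rw [hfun]
  rw [intervalIntegral.integral_add (step_intervalIntegrable a _)
        ((step_intervalIntegrable b _).add intervalIntegrable_const),
      intervalIntegral.integral_add (step_intervalIntegrable b _) intervalIntegrable_const,
      step_integral _ _ h0 (hab.trans hb1), step_integral _ _ (h0.trans hab) hb1,
      intervalIntegral.integral_const]
  simp only [smul_eq_mul]
  ring

/-- **Bivariate joint probabilities.**
For two variables of the same block of the one-factor binary model with `β₁ ≤ β₂`,
joint probabilities
`p h h' = ∫₀¹ p₁(u)^h (1-p₁(u))^(1-h) p₂(u)^{h'} (1-p₂(u))^(1-h') du` and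
`r = s ε₁ ε₂ β₁ (1-β₂)` with `s = 1` if `δ₁ = δ₂` and `s = -1` otherwise, one has
`p 1 1 = α₁α₂ + r`, `p 0 1 = (1-α₁)α₂ - r`, `p 1 0 = α₁(1-α₂) - r` and
`p 0 0 = (1-α₁)(1-α₂) + r`. -/
theorem bivariate_joint_probabilities
    (α1 ε1 δ1 α2 ε2 δ2 β1 β2 lam1 ν1 lam2 ν2 r : ℝ)
    (hα1 : α1 ∈ Set.Ioo (0:ℝ) 1) (hα2 : α2 ∈ Set.Ioo (0:ℝ) 1)
    (hε1 : ε1 ∈ Set.Ioo (0:ℝ) 1) (hε2 : ε2 ∈ Set.Ioo (0:ℝ) 1)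
    (hδ1 : δ1 = 0 ∨ δ1 = 1) (hδ2 : δ2 = 0 ∨ δ2 = 1)
    (hβ1 : β1 = if δ1 = 1 then α1 else 1 - α1)
    (hβ2 : β2 = if δ2 = 1 then α2 else 1 - α2)
    (hlam1 : lam1 = (1 - ε1) * α1 + ε1 * δ1) (hν1 : ν1 = (1 - ε1) * α1 + ε1 * (1 - δ1))
    (hlam2 : lam2 = (1 - ε2) * α2 + ε2 * δ2) (hν2 : ν2 = (1 - ε2) * α2 + ε2 * (1 - δ2))
    (hord : β1 ≤ β2)
    (hr : r = (if δ1 = δ2 then (1:ℝ) else -1) * ε1 * ε2 * β1 * (1 - β2))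
    (p : ℕ → ℕ → ℝ)
    (hp : ∀ h h', p h h' = ∫ u in (0:ℝ)..1,
      ((if u < β1 then lam1 else ν1) ^ h *
        (1 - (if u < β1 then lam1 else ν1)) ^ (1 - h)) *
      ((if u < β2 then lam2 else ν2) ^ h' *
        (1 - (if u < β2 then lam2 else ν2)) ^ (1 - h'))) :
    p 1 1 = α1 * α2 + r ∧
    p 0 1 = (1 - α1) * α2 - r ∧
    p 1 0 = α1 * (1 - α2) - r ∧
    p 0 0 = (1 - α1) * (1 - α2) + r := by
  have hb10 : 0 ≤ β1 := by
    rcases hδ1 with h | h <;> simp [hβ1, h] <;> [skip; exact hα1.1.le] <;> linarith [hα1.2]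
  have hb21 : β2 ≤ 1 := by
    rcases hδ2 with h | h <;> simp [hβ2, h] <;> [skip; exact hα2.2.le] <;> linarith [hα2.1]
  have hone1 : ∀ u : ℝ, (1 - (if u < β1 then lam1 else ν1))
      = if u < β1 then 1 - lam1 else 1 - ν1 := by intro u; split <;> rfl
  have hone2 : ∀ u : ℝ, (1 - (if u < β2 then lam2 else ν2))
      = if u < β2 then 1 - lam2 else 1 - ν2 := by intro u; split <;> rfl
  have e11 : p 1 1 = β1 * (lam1 * lam2) + (β2 - β1) * (ν1 * lam2) + (1 - β2) * (ν1 * ν2) := by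
    rw [hp]
    simp only [pow_one, Nat.sub_self, pow_zero, mul_one, one_mul]
    exact step2_integral _ _ _ _ _ _ hb10 hord hb21
  have e01 : p 0 1 = β1 * ((1 - lam1) * lam2) + (β2 - β1) * ((1 - ν1) * lam2)
      + (1 - β2) * ((1 - ν1) * ν2) := by
    rw [hp]
    simp only [pow_one, pow_zero, Nat.sub_zero, Nat.sub_self, mul_one, one_mul]
    simp_rw [hone1]
    exact step2_integral _ _ _ _ _ _ hb10 hord hb21
  have e10 : p 1 0 = β1 * (lam1 * (1 - lam2)) + (β2 - β1) * (ν1 * (1 - lam2))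
      + (1 - β2) * (ν1 * (1 - ν2)) := by
    rw [hp]
    simp only [pow_one, pow_zero, Nat.sub_zero, Nat.sub_self, mul_one, one_mul]
    simp_rw [hone2]
    exact step2_integral _ _ _ _ _ _ hb10 hord hb21
  have e00 : p 0 0 = β1 * ((1 - lam1) * (1 - lam2)) + (β2 - β1) * ((1 - ν1) * (1 - lam2))
      + (1 - β2) * ((1 - ν1) * (1 - ν2)) := by
    rw [hp]
    simp only [pow_one, pow_zero, Nat.sub_zero, mul_one, one_mul]
    simp_rw [hone1, hone2]
    exact step2_integral _ _ _ _ _ _ hb10 hord hb21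
  rw [e11, e01, e10, e00]
  rcases hδ1 with h1 | h1 <;> rcases hδ2 with h2 | h2 <;> subst h1 h2 <;>
    norm_num at hβ1 hβ2 hlam1 hν1 hlam2 hν2 hr <;>
    subst hβ1 hβ2 hlam1 hν1 hlam2 hν2 hr <;>
    refine ⟨by ring, by ring, by ring, by ring⟩
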